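/- arXiv:0807.1750 — 7 statements merged into one kernel-verified Lean document; each statement's English description precedes it below -/
import Mathlib

section
/- For each k ∈ {1,...,n+1}, the column vector w_k with entries w_{i,k} = (−2)^{i-k} · C(n+1-k, i-k) for i ≥ k (and 0 for i < k) is an eigenvector of the matrix M with eigenvalue −λ_{k-1}, i.e., M·w_k = −λ_{k-1}·w_k. -/
/-- λ_k = β(n−k)/n (0-based index k = 0,…,n). -/
noncomputable def lam (n : ℕ) (β : ℝ) (k : ℕ) : ℝ := β * ((n : ℝ) - k) / n

/-- The matrix M: diagonal entries −λ_j, subdiagonal entries 2λ_j, 0 elsewhere. -/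
noncomputable def mMat (n : ℕ) (β : ℝ) : Matrix (Fin (n + 1)) (Fin (n + 1)) ℝ :=
  fun i j =>
    if (i : ℕ) = (j : ℕ) then -lam n β j
    else if (i : ℕ) = (j : ℕ) + 1 then 2 * lam n β j
    else 0

/-- auxiliary: the eigenvector -/
noncomputable def wvec (n : ℕ) (k : Fin (n + 1)) : Fin (n + 1) → ℝ :=
  fun i : Fin (n + 1) =>
    if (k : ℕ) ≤ (i : ℕ) then
      (-2 : ℝ) ^ ((i : ℕ) - k) * ((n - (k : ℕ)).choose ((i : ℕ) - k)) else 0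

theorem mMat_eigenvector' (n : ℕ) (β : ℝ) (k : Fin (n + 1)) :
    (mMat n β).mulVec (wvec n k) = fun i => -lam n β k * wvec n k i := by
  funext i
  have hsplit : ∀ j : Fin (n+1), mMat n β i j =
      (if (i:ℕ) = (j:ℕ) then -lam n β j else 0)
      + (if (i:ℕ) = (j:ℕ)+1 then 2 * lam n β j else 0) := by
    intro j
    unfold mMat
    split_ifs <;> first | ring1 | (exfalso; omega)
  have hmv : (mMat n β).mulVec (wvec n k) i
      = (-lam n β i) * wvec n k i
        + (if h : 1 ≤ (i:ℕ) then
            2 * lam n β ((i:ℕ)-1) * wvec n k ⟨(i:ℕ)-1, by omega⟩ else 0) := by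
    rw [Matrix.mulVec, dotProduct]
    simp only [hsplit, add_mul, Finset.sum_add_distrib]
    congr 1
    · rw [Finset.sum_eq_single i]
      · simp
      · intro j _ hj
        rw [if_neg (fun h => hj (Fin.ext h.symm)), zero_mul]
      · simp
    · by_cases h : 1 ≤ (i:ℕ)
      · rw [dif_pos h, Finset.sum_eq_single (⟨(i:ℕ)-1, by omega⟩ : Fin (n+1))]
        · rw [if_pos (by simp only [Fin.val_mk]; omega)]
        · intro j _ hj
          rw [if_neg, zero_mul]
          intro hc
          exact hj (Fin.ext (by simp only [Fin.val_mk]; omega))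
        · simp
      · rw [dif_neg h]
        refine Finset.sum_eq_zero fun j _ => ?_
        rw [if_neg (by omega), zero_mul]
  rw [hmv]
  rcases lt_trichotomy (i:ℕ) (k:ℕ) with h | h | h
  · have h1 : wvec n k i = 0 := if_neg (by omega)
    rw [h1]
    by_cases h2 : 1 ≤ (i:ℕ)
    · rw [dif_pos h2]
      have h3 : wvec n k ⟨(i:ℕ)-1, by omega⟩ = 0 := if_neg (by simp; omega)
      rw [h3]; ring
    · rw [dif_neg h2]; ring
  · by_cases h2 : 1 ≤ (i:ℕ)
    · rw [dif_pos h2]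
      have h3 : wvec n k ⟨(i:ℕ)-1, by omega⟩ = 0 := if_neg (by simp; omega)
      rw [h3, show lam n β (i:ℕ) = lam n β (k:ℕ) from by rw [h]]
      ring
    · rw [dif_neg h2, show lam n β (i:ℕ) = lam n β (k:ℕ) from by rw [h]]
      ring
  · -- k < i
    have h2 : 1 ≤ (i:ℕ) := by omega
    set a := (i:ℕ) with ha
    set b := (k:ℕ) with hb
    have han : a ≤ n := by omega
    have hba : b ≤ a := le_of_lt h
    have hba1 : b ≤ a - 1 := by omega
    rw [dif_pos h2]
    have hw1 : wvec n k i = (-2:ℝ) ^ (a-b) * ((n-b).choose (a-b)) := if_pos hba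
    have hw2 : wvec n k ⟨a-1, by omega⟩ = (-2:ℝ) ^ (a-1-b) * ((n-b).choose (a-1-b)) := by
      unfold wvec
      rw [if_pos (by simpa using hba1)]
    rw [hw1, hw2]
    set c1 := (n-b).choose (a-b) with hc1
    set c2 := (n-b).choose (a-1-b) with hc2
    have key : c1 * (a-b) = c2 * (n-a+1) := by
      rw [hc1, show a - b = (a-1-b)+1 from by omega, Nat.choose_succ_right_eq]
      congr 1
      omega
    have keyR : (c1:ℝ) * ((a:ℝ)-b) = (c2:ℝ) * ((n:ℝ)-a+1) := by
      have := congrArg (fun m : ℕ => (m:ℝ)) key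
      push_cast [Nat.cast_sub hba, Nat.cast_sub han] at this
      exact this
    have hp : (-2:ℝ)^(a-b) = (-2)^(a-1-b) * (-2) := by
      rw [show a-b = (a-1-b)+1 from by omega, pow_succ]
    simp only [lam, ← ha]
    push_cast [Nat.cast_sub h2]
    rw [hp]
    linear_combination (-(2*β*(-2:ℝ)^(a-1-b)/(n:ℝ))) * keyR

/-- The column w_k with entries (−2)^{i−k}·C(n−k, i−k) (i ≥ k, 0-based) is an
eigenvector of M with eigenvalue −λ_k. -/
theorem mMat_eigenvector (n : ℕ) (β : ℝ) (hβ : 0 < β) (k : Fin (n + 1)) :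
    (mMat n β).mulVec
        (fun i : Fin (n + 1) =>
          if (k : ℕ) ≤ (i : ℕ) then
            (-2 : ℝ) ^ ((i : ℕ) - k) * ((n - (k : ℕ)).choose ((i : ℕ) - k)) else 0)
      = fun i : Fin (n + 1) =>
          -lam n β k *
            (if (k : ℕ) ≤ (i : ℕ) then
              (-2 : ℝ) ^ ((i : ℕ) - k) * ((n - (k : ℕ)).choose ((i : ℕ) - k)) else 0) := by
  exact mMat_eigenvector' n β k
end

section
/- The matrix M admits the diagonalization M = A(−2) · D · A(2), where D = diag(−λ_0, −λ_1, ..., −λ_n). -/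
def aMat (n : ℕ) (γ : ℝ) : Matrix (Fin (n + 1)) (Fin (n + 1)) ℝ :=
  fun i k => if (k : ℕ) ≤ (i : ℕ) then γ ^ ((i : ℕ) - k) * ((n - (k : ℕ)).choose ((i : ℕ) - k)) else 0

/-- Key natural-number binomial identity:
`(a+1)·C(a,b) + (a−b)·C(a+1,b+1) = (a+1)·C(a+1,b+1)`. -/
lemma auxChoose (a b : ℕ) :
    (a + 1) * a.choose b + (a - b) * (a + 1).choose (b + 1) =
      (a + 1) * (a + 1).choose (b + 1) := by
  have h1 : (a + 1).choose (b + 2) * (b + 2) = (a + 1).choose (b + 1) * (a - b) := by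
    have := Nat.choose_succ_right_eq (a + 1) (b + 1)
    simpa [Nat.succ_sub_succ] using this
  have h2 : (a + 1) * a.choose (b + 1) = (a + 1).choose (b + 2) * (b + 2) :=
    Nat.add_one_mul_choose_eq a (b + 1)
  have h3 : (a + 1).choose (b + 1) = a.choose b + a.choose (b + 1) :=
    Nat.choose_succ_succ a b
  nlinarith [h1, h2, h3]

lemma aMat_mul_aMat (n : ℕ) : aMat n 2 * aMat n (-2) = 1 := by
  ext i j
  rw [Matrix.mul_apply, Matrix.one_apply]
  have hstep : ∀ k : Fin (n + 1), aMat n 2 i k * aMat n (-2) k j =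
      (fun k : ℕ => (if k ≤ (i : ℕ) then (2 : ℝ) ^ ((i : ℕ) - k) *
          ((n - k).choose ((i : ℕ) - k)) else 0) *
        (if (j : ℕ) ≤ k then (-2 : ℝ) ^ (k - (j : ℕ)) *
          ((n - (j : ℕ)).choose (k - (j : ℕ))) else 0)) (k : ℕ) := by
    intro k; rfl
  rw [show (∑ k : Fin (n + 1), aMat n 2 i k * aMat n (-2) k j) =
      ∑ k ∈ Finset.range (n + 1),
        (if k ≤ (i : ℕ) then (2 : ℝ) ^ ((i : ℕ) - k) *
            ((n - k).choose ((i : ℕ) - k)) else 0) *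
          (if (j : ℕ) ≤ k then (-2 : ℝ) ^ (k - (j : ℕ)) *
            ((n - (j : ℕ)).choose (k - (j : ℕ))) else 0) from by
    rw [← Fin.sum_univ_eq_sum_range]
    exact Finset.sum_congr rfl fun k _ => hstep k]
  by_cases hji : (j : ℕ) ≤ (i : ℕ)
  · -- restrict to Ico j (i+1)
    have hin : (i : ℕ) ≤ n := Nat.lt_succ_iff.mp i.isLt
    rw [← Finset.sum_subset (s₁ := Finset.Ico (j : ℕ) ((i : ℕ) + 1))
        (by intro k hk
            simp only [Finset.mem_Ico] at hk
            simp only [Finset.mem_range]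
            omega)
        (by intro k hk hk'
            simp only [Finset.mem_Ico, Finset.mem_range, not_and, not_lt] at hk hk'
            rcases Nat.lt_or_ge (i : ℕ) k with h | h
            · rw [if_neg (show ¬ k ≤ (i : ℕ) by omega)]; ring
            · rw [if_neg (show ¬ (j : ℕ) ≤ k by omega)]; ring)]
    rw [Finset.sum_Ico_eq_sum_range]
    set m := (i : ℕ) - (j : ℕ) with hm
    set a := n - (j : ℕ) with ha
    have hsum : ∀ s ∈ Finset.range ((i : ℕ) + 1 - (j : ℕ)),
        (if (j : ℕ) + s ≤ (i : ℕ) then (2 : ℝ) ^ ((i : ℕ) - ((j : ℕ) + s)) *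
            ((n - ((j : ℕ) + s)).choose ((i : ℕ) - ((j : ℕ) + s))) else 0) *
          (if (j : ℕ) ≤ (j : ℕ) + s then (-2 : ℝ) ^ (((j : ℕ) + s) - (j : ℕ)) *
            ((n - (j : ℕ)).choose (((j : ℕ) + s) - (j : ℕ))) else 0)
        = ((a.choose m : ℕ) : ℝ) * ((-2 : ℝ) ^ s * (2 : ℝ) ^ (m - s) * (m.choose s : ℕ)) := by
      intro s hs
      simp only [Finset.mem_range] at hs
      have hsm : s ≤ m := by omega
      rw [if_pos (by omega), if_pos (by omega)]
      have e1 : (i : ℕ) - ((j : ℕ) + s) = m - s := by omega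
      have e2 : n - ((j : ℕ) + s) = a - s := by omega
      have e3 : ((j : ℕ) + s) - (j : ℕ) = s := by omega
      rw [e1, e2, e3]
      have hma : m ≤ a := by omega
      have key : a.choose m * m.choose s = a.choose s * (a - s).choose (m - s) :=
        Nat.choose_mul hsm
      calc (2 : ℝ) ^ (m - s) * ((a - s).choose (m - s) : ℕ) *
            ((-2 : ℝ) ^ s * ((a.choose s : ℕ) : ℝ))
          = ((a.choose s * (a - s).choose (m - s) : ℕ) : ℝ) *
              ((-2 : ℝ) ^ s * (2 : ℝ) ^ (m - s)) := by push_cast; ring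
        _ = ((a.choose m * m.choose s : ℕ) : ℝ) *
              ((-2 : ℝ) ^ s * (2 : ℝ) ^ (m - s)) := by rw [← key]
        _ = ((a.choose m : ℕ) : ℝ) *
              ((-2 : ℝ) ^ s * (2 : ℝ) ^ (m - s) * (m.choose s : ℕ)) := by push_cast; ring
    rw [Finset.sum_congr rfl hsum, ← Finset.mul_sum]
    have hrange : (i : ℕ) + 1 - (j : ℕ) = m + 1 := by omega
    rw [hrange]
    have hbinom : ∑ s ∈ Finset.range (m + 1),
        (-2 : ℝ) ^ s * (2 : ℝ) ^ (m - s) * (m.choose s : ℕ) = ((-2 : ℝ) + 2) ^ m :=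
      (add_pow (-2 : ℝ) 2 m).symm
    rw [hbinom]
    norm_num
    by_cases hij : i = j
    · have hv : (i : ℕ) = (j : ℕ) := by rw [hij]
      have hm0 : m = 0 := by omega
      simp [hij, hm0]
    · have hm0 : m ≠ 0 := by
        intro h
        exact hij (Fin.ext (by omega))
      rw [if_neg hij, zero_pow hm0, mul_zero]
  · rw [if_neg (by intro h; exact hji (le_of_eq (congrArg Fin.val h.symm)))]
    apply Finset.sum_eq_zero
    intro k hk
    rcases Nat.lt_or_ge (i : ℕ) k with h | h
    · rw [if_neg (show ¬ k ≤ (i : ℕ) by omega)]; ring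
    · rw [if_neg (show ¬ (j : ℕ) ≤ k by omega)]; ring

lemma aMat_mul_mMat (n : ℕ) (β : ℝ) :
    aMat n 2 * mMat n β =
      Matrix.diagonal (fun k : Fin (n + 1) => -lam n β k) * aMat n 2 := by
  ext i j
  rw [Matrix.mul_apply, Matrix.diagonal_mul]
  have hjn : (j : ℕ) ≤ n := Nat.lt_succ_iff.mp j.isLt
  have hin : (i : ℕ) ≤ n := Nat.lt_succ_iff.mp i.isLt
  by_cases hj : (j : ℕ) < n
  · set j1 : Fin (n + 1) := ⟨(j : ℕ) + 1, by omega⟩ with hj1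
    have hne : j ≠ j1 := by
      intro h
      have := congrArg Fin.val h
      simp [hj1] at this
    have hterm : ∀ k : Fin (n + 1), aMat n 2 i k * mMat n β k j =
        (if k = j then aMat n 2 i j * (-lam n β j) else 0) +
        (if k = j1 then aMat n 2 i j1 * (2 * lam n β j) else 0) := by
      intro k
      by_cases h1 : k = j
      · rw [if_pos h1, if_neg (h1 ▸ hne), h1]
        simp [mMat]
      · rw [if_neg h1]
        by_cases h2 : k = j1
        · rw [if_pos h2, h2]
          have hv : ((j1 : ℕ)) = (j : ℕ) + 1 := rfl
          simp [mMat, hv]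
        · rw [if_neg h2]
          have hv1 : (k : ℕ) ≠ (j : ℕ) := fun h => h1 (Fin.ext h)
          have hv2 : (k : ℕ) ≠ (j : ℕ) + 1 := by
            intro h
            exact h2 (Fin.ext h)
          simp [mMat, hv1, hv2]
    rw [Finset.sum_congr rfl fun k _ => hterm k, Finset.sum_add_distrib,
      Finset.sum_ite_eq' Finset.univ j, Finset.sum_ite_eq' Finset.univ j1,
      if_pos (Finset.mem_univ j), if_pos (Finset.mem_univ j1)]
    -- now a scalar identity
    rcases Nat.lt_trichotomy (i : ℕ) (j : ℕ) with h | h | h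
    · -- i < j : everything vanishes
      rw [show aMat n 2 i j = 0 from if_neg (by omega),
          show aMat n 2 i j1 = 0 from if_neg (by simp [hj1]; omega)]
      ring
    · -- i = j
      rw [show aMat n 2 i j = 1 from by
            simp [aMat, h, Nat.le_of_eq h.symm],
          show aMat n 2 i j1 = 0 from if_neg (by simp [hj1]; omega)]
      simp [lam, h]
    · -- j < i
      rw [show aMat n 2 i j = (2 : ℝ) ^ ((i : ℕ) - j) *
            ((n - (j : ℕ)).choose ((i : ℕ) - j)) from if_pos (by omega),
          show aMat n 2 i j1 = (2 : ℝ) ^ ((i : ℕ) - ((j : ℕ) + 1)) *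
            ((n - ((j : ℕ) + 1)).choose ((i : ℕ) - ((j : ℕ) + 1))) from if_pos (by
              simp [hj1]; omega)]
      -- key natural identity
      have hkey := auxChoose (n - (j : ℕ) - 1) ((i : ℕ) - (j : ℕ) - 1)
      have e1 : n - (j : ℕ) - 1 + 1 = n - (j : ℕ) := by omega
      have e2 : (i : ℕ) - (j : ℕ) - 1 + 1 = (i : ℕ) - (j : ℕ) := by omega
      have e3 : n - (j : ℕ) - 1 - ((i : ℕ) - (j : ℕ) - 1) = n - (i : ℕ) := by omega
      rw [e1, e2, e3] at hkey
      -- cast to ℝ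
      have hkeyR : ((n : ℝ) - (j : ℕ)) * ((n - (j : ℕ) - 1).choose ((i : ℕ) - (j : ℕ) - 1)) +
          ((n : ℝ) - (i : ℕ)) * ((n - (j : ℕ)).choose ((i : ℕ) - (j : ℕ))) =
          ((n : ℝ) - (j : ℕ)) * ((n - (j : ℕ)).choose ((i : ℕ) - (j : ℕ))) := by
        have c1 : ((n - (j : ℕ) : ℕ) : ℝ) = (n : ℝ) - (j : ℕ) := by
          push_cast [Nat.cast_sub hjn]; ring
        have c2 : ((n - (i : ℕ) : ℕ) : ℝ) = (n : ℝ) - (i : ℕ) := by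
          push_cast [Nat.cast_sub hin]; ring
        have := congrArg (fun t : ℕ => (t : ℝ)) hkey
        push_cast at this
        rw [c1, c2] at this
        linarith [this]
      have hexp : (2 : ℝ) ^ ((i : ℕ) - (j : ℕ)) =
          2 * (2 : ℝ) ^ ((i : ℕ) - ((j : ℕ) + 1)) := by
        rw [← pow_succ']
        congr 1
        omega
      have e4 : (i : ℕ) - ((j : ℕ) + 1) = (i : ℕ) - (j : ℕ) - 1 := by omega
      have e5 : n - ((j : ℕ) + 1) = n - (j : ℕ) - 1 := by omega
      rw [hexp, e4, e5]
      simp only [lam]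
      linear_combination (2 * (2 : ℝ) ^ ((i : ℕ) - (j : ℕ) - 1) * β / n) * hkeyR
  · -- j = n : both sides vanish
    have hjn' : (j : ℕ) = n := by omega
    have hlamj : lam n β j = 0 := by simp [lam, hjn']
    have hz : ∀ k : Fin (n + 1), aMat n 2 i k * mMat n β k j = 0 := by
      intro k
      have : mMat n β k j = 0 := by
        by_cases h1 : (k : ℕ) = (j : ℕ)
        · simp [mMat, h1, hlamj]
        · have h2 : (k : ℕ) ≠ (j : ℕ) + 1 := by
            have := Nat.lt_succ_iff.mp k.isLt
            omega
          simp [mMat, h1, h2]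
      rw [this, mul_zero]
    rw [Finset.sum_congr rfl fun k _ => hz k, Finset.sum_const_zero]
    by_cases hi : (i : ℕ) = n
    · simp [lam, hi]
    · rw [show aMat n 2 i j = 0 from if_neg (by omega)]
      ring

/-- Diagonalization M = A(−2)·D·A(2) with D = diag(−λ_0, …, −λ_n). -/
theorem mMat_diagonalization (n : ℕ) (β : ℝ) (hβ : 0 < β) :
    mMat n β =
      aMat n (-2) * Matrix.diagonal (fun k : Fin (n + 1) => -lam n β k) * aMat n 2 := by
  have h1 : aMat n (-2) * aMat n 2 = 1 :=
    mul_eq_one_comm.mp (aMat_mul_aMat n)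
  calc mMat n β = (aMat n (-2) * aMat n 2) * mMat n β := by rw [h1, one_mul]
    _ = aMat n (-2) * (aMat n 2 * mMat n β) := by rw [Matrix.mul_assoc]
    _ = aMat n (-2) * (Matrix.diagonal (fun k : Fin (n + 1) => -lam n β k) * aMat n 2) := by
        rw [aMat_mul_mMat]
    _ = aMat n (-2) * Matrix.diagonal (fun k : Fin (n + 1) => -lam n β k) * aMat n 2 := by
        rw [Matrix.mul_assoc]
end

section
/- The unique solution x(t) of the linear ODE system x'(t) = M·x(t) with initial condition x(0) = (1, 0, ..., 0) satisfies x(t) = A(−2) · exp(tD) · A(2) · (1,0,...,0)ᵀ, where exp(tD) = diag(e^{−λ_0 t}, ..., e^{−λ_n t}). -/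
noncomputable def aEnt (n : ℕ) (γ : ℝ) (i k : ℕ) : ℝ :=
  if k ≤ i then γ ^ (i - k) * ((n - k).choose (i - k) : ℝ) else 0

noncomputable def mEnt (n : ℕ) (β : ℝ) (i j : ℕ) : ℝ :=
  if i = j then -lam n β j else if i = j + 1 then 2 * lam n β j else 0

open Finset in
lemma sum_binom (γ δ : ℝ) (m a : ℕ) (ham : a ≤ m) :
    ∑ r ∈ Finset.range (a+1), (γ^(a-r) * ((m-r).choose (a-r) : ℝ)) * (δ^r * (m.choose r : ℝ))
      = (γ+δ)^a * (m.choose a : ℝ) := by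
  rw [add_comm γ δ, add_pow, Finset.sum_mul]
  refine Finset.sum_congr rfl fun r hr => ?_
  have hr' : r ≤ a := Nat.lt_succ_iff.mp (Finset.mem_range.mp hr)
  have key : (m.choose a) * (a.choose r) = m.choose r * (m-r).choose (a-r) := Nat.choose_mul hr'
  have key' : ((m.choose a : ℝ)) * ((a.choose r : ℝ))
      = ((m.choose r : ℝ)) * (((m-r).choose (a-r) : ℝ)) := by exact_mod_cast key
  linear_combination (γ^(a-r) * δ^r) * key'.symm

open Finset in
lemma aMat_mul (n : ℕ) (γ δ : ℝ) : aMat n γ * aMat n δ = aMat n (γ + δ) := by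
  ext i j
  rw [Matrix.mul_apply]
  by_cases hij : (j:ℕ) ≤ (i:ℕ)
  · set g : ℕ → ℝ := fun k =>
      (if k ≤ (i:ℕ) then γ ^ ((i:ℕ) - k) * ((n - k).choose ((i:ℕ) - k) : ℝ) else 0) *
        (if (j:ℕ) ≤ k then δ ^ (k - (j:ℕ)) * ((n - (j:ℕ)).choose (k - (j:ℕ)) : ℝ) else 0) with hg
    have hi : (i:ℕ) ≤ n := by omega
    calc (∑ k : Fin (n+1), aMat n γ i k * aMat n δ k j)
        = ∑ k ∈ Finset.range (n+1), g k := Fin.sum_univ_eq_sum_range g (n+1)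
      _ = ∑ k ∈ Finset.Ico (j:ℕ) ((i:ℕ)+1), g k := by
          refine (Finset.sum_subset ?_ ?_).symm
          · intro k hk
            simp only [Finset.mem_Ico] at hk
            exact Finset.mem_range.mpr (by omega)
          · intro k _ hk
            simp only [Finset.mem_Ico, not_and, not_lt] at hk
            rcases le_or_gt (j:ℕ) k with h | h
            · have : ¬ k ≤ (i:ℕ) := by have := hk h; omega
              rw [hg]; simp only [if_neg this, zero_mul]
            · rw [hg]; simp only [if_neg (by omega : ¬ (j:ℕ) ≤ k), mul_zero]
      _ = ∑ r ∈ Finset.range ((i:ℕ)+1-(j:ℕ)), g ((j:ℕ) + r) := Finset.sum_Ico_eq_sum_range g _ _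
      _ = ∑ r ∈ Finset.range (((i:ℕ)-(j:ℕ))+1),
            (γ^(((i:ℕ)-(j:ℕ))-r) * (((n-(j:ℕ))-r).choose (((i:ℕ)-(j:ℕ))-r) : ℝ)) *
              (δ^r * ((n-(j:ℕ)).choose r : ℝ)) := by
          rw [show (i:ℕ)+1-(j:ℕ) = ((i:ℕ)-(j:ℕ))+1 by omega]
          refine Finset.sum_congr rfl fun r hr => ?_
          have hr' : r ≤ (i:ℕ)-(j:ℕ) := Nat.lt_succ_iff.mp (Finset.mem_range.mp hr)
          rw [hg]
          simp only [if_pos (by omega : (j:ℕ) + r ≤ (i:ℕ)), if_pos (by omega : (j:ℕ) ≤ (j:ℕ)+r)]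
          rw [show (i:ℕ) - ((j:ℕ)+r) = ((i:ℕ)-(j:ℕ))-r by omega,
            show n - ((j:ℕ)+r) = (n-(j:ℕ))-r by omega,
            show (j:ℕ)+r-(j:ℕ) = r by omega]
      _ = (γ+δ)^((i:ℕ)-(j:ℕ)) * ((n-(j:ℕ)).choose ((i:ℕ)-(j:ℕ)) : ℝ) :=
          sum_binom γ δ (n-(j:ℕ)) ((i:ℕ)-(j:ℕ)) (by omega)
      _ = aMat n (γ+δ) i j := by rw [aMat]; simp only [if_pos hij]
  · rw [Finset.sum_eq_zero, aMat]
    · simp only [if_neg hij]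
    intro k _
    by_cases h : (k:ℕ) ≤ (i:ℕ)
    · have h2 : ¬ (j:ℕ) ≤ (k:ℕ) := by omega
      simp [aMat, h2]
    · simp [aMat, h]

open Finset in
lemma aMat_zero (n : ℕ) : aMat n 0 = 1 := by
  ext i j
  by_cases h : i = j
  · subst h; simp [aMat]
  · rw [Matrix.one_apply_ne h, aMat]
    by_cases h2 : (j:ℕ) ≤ (i:ℕ)
    · have h3 : 0 < (i:ℕ) - (j:ℕ) := by
        have := Fin.val_ne_of_ne h; omega
      simp [if_pos h2, zero_pow (by omega : (i:ℕ)-(j:ℕ) ≠ 0)]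
    · simp [h2]

open Finset in
lemma mMat_mul_aMat (n : ℕ) (β : ℝ) :
    mMat n β * aMat n (-2) = aMat n (-2) * Matrix.diagonal (fun k : Fin (n+1) => -lam n β k) := by
  ext i k
  rw [Matrix.mul_apply, Matrix.mul_diagonal]
  have hi : (i:ℕ) ≤ n := by omega
  have hk : (k:ℕ) ≤ n := by omega
  have hsum : (∑ j : Fin (n+1), mMat n β i j * aMat n (-2) j k)
      = ∑ j ∈ Finset.range (n+1), mEnt n β (i:ℕ) j * aEnt n (-2) j (k:ℕ) :=
    Fin.sum_univ_eq_sum_range (fun j => mEnt n β (i:ℕ) j * aEnt n (-2) j (k:ℕ)) (n+1)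
  rw [hsum, show aMat n (-2) i k = aEnt n (-2) (i:ℕ) (k:ℕ) from rfl]
  rcases Nat.eq_zero_or_pos (i:ℕ) with h0 | hpos
  · rw [Finset.sum_eq_single_of_mem 0 (Finset.mem_range.mpr (by omega))]
    · rw [h0, mEnt, if_pos rfl]
      rcases Nat.eq_zero_or_pos (k:ℕ) with hk0 | hkpos
      · rw [hk0]; ring
      · rw [aEnt, if_neg (by omega : ¬ (k:ℕ) ≤ 0)]; ring
    · intro j _ hj
      rw [mEnt, if_neg (by omega : ¬ (i:ℕ) = j), if_neg (by omega : ¬ (i:ℕ) = j + 1), zero_mul]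
  · obtain ⟨w, hiw⟩ : ∃ w, (i:ℕ) = w + 1 := ⟨(i:ℕ) - 1, by omega⟩
    have hwn : w + 1 ≤ n := by omega
    rw [hiw, Finset.sum_eq_add_of_mem w (w+1)
      (Finset.mem_range.mpr (by omega)) (Finset.mem_range.mpr (by omega)) (by omega)
      (by
        intro j _ hj
        rw [mEnt, if_neg (by omega : ¬ w + 1 = j), if_neg (by omega : ¬ w + 1 = j + 1), zero_mul])]
    rw [mEnt, if_neg (by omega : ¬ w + 1 = w), if_pos rfl, mEnt, if_pos rfl]
    rcases lt_trichotomy (k:ℕ) (w+1) with hlt | heq | hgt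
    · have hkw : (k:ℕ) ≤ w := by omega
      rw [aEnt, if_pos hkw, aEnt, if_pos (by omega : (k:ℕ) ≤ w + 1)]
      rw [show w + 1 - (k:ℕ) = (w - (k:ℕ)) + 1 by omega, pow_succ,
        show w - (k:ℕ) + 1 = w + 1 - (k:ℕ) by omega]
      have key : (w + 1 - (k:ℕ)) * ((n - (k:ℕ)).choose (w + 1 - (k:ℕ)))
          = (n - w) * ((n - (k:ℕ)).choose (w - (k:ℕ))) := by
        have h := Nat.choose_succ_right_eq (n - (k:ℕ)) (w - (k:ℕ))
        rw [show w - (k:ℕ) + 1 = w + 1 - (k:ℕ) by omega,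
          show n - (k:ℕ) - (w - (k:ℕ)) = n - w by omega] at h
        rw [Nat.mul_comm, h, Nat.mul_comm]
      have keyR : ((w:ℝ) + 1 - ((k:ℕ):ℝ)) * (((n - (k:ℕ)).choose (w + 1 - (k:ℕ)) : ℕ) : ℝ)
          = ((n:ℝ) - (w:ℝ)) * (((n - (k:ℕ)).choose (w - (k:ℕ)) : ℕ) : ℝ) := by
        have h := congrArg (fun x : ℕ => (x : ℝ)) key
        push_cast at h
        rw [Nat.cast_sub (by omega : (k:ℕ) ≤ w + 1), Nat.cast_sub (by omega : w ≤ n)] at h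
        push_cast at h
        convert h using 2 <;> ring
      simp only [lam]
      push_cast
      linear_combination (-(β / (n:ℝ))) * 2 * ((-2:ℝ) ^ (w - (k:ℕ))) * keyR
    · rw [aEnt, if_neg (by omega : ¬ (k:ℕ) ≤ w), aEnt, if_pos (by omega : (k:ℕ) ≤ w + 1),
        show w + 1 - (k:ℕ) = 0 by omega, heq]
      simp
    · rw [aEnt, if_neg (by omega : ¬ (k:ℕ) ≤ w), aEnt, if_neg (by omega : ¬ (k:ℕ) ≤ w + 1)]
      ring

/-- Any solution of x' = M x with x(0) = (1,0,…,0) equals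
A(−2)·exp(tD)·A(2)·(1,0,…,0)ᵀ, where exp(tD) = diag(e^{−λ_0 t},…,e^{−λ_n t}). -/
theorem ode_solution (n : ℕ) (β : ℝ) (hβ : 0 < β)
    (x : ℝ → Fin (n + 1) → ℝ)
    (hderiv : ∀ (t : ℝ) (i : Fin (n + 1)),
      HasDerivAt (fun s => x s i) ((mMat n β).mulVec (x t) i) t)
    (hinit : x 0 = fun i : Fin (n + 1) => if i = 0 then 1 else 0) :
    ∀ t : ℝ, x t =
      (aMat n (-2) *
        Matrix.diagonal (fun k : Fin (n + 1) => Real.exp (-lam n β k * t)) *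
        aMat n 2).mulVec (fun i : Fin (n + 1) => if i = 0 then 1 else 0) := by
  classical
  set e0 : Fin (n+1) → ℝ := fun i => if i = 0 then 1 else 0 with he0
  set c : Fin (n+1) → ℝ := (aMat n 2).mulVec e0 with hc
  set y : ℝ → Fin (n+1) → ℝ :=
    fun t i => ∑ k, aMat n (-2) i k * (Real.exp (-lam n β k * t) * c k) with hy
  have hyRHS : ∀ t, (aMat n (-2) *
      Matrix.diagonal (fun k : Fin (n + 1) => Real.exp (-lam n β k * t)) *
      aMat n 2).mulVec e0 = y t := by
    intro t
    rw [Matrix.mul_assoc, ← Matrix.mulVec_mulVec, ← Matrix.mulVec_mulVec, ← hc,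
      show (Matrix.diagonal fun k : Fin (n+1) => Real.exp (-lam n β k * t)).mulVec c
          = fun k : Fin (n+1) => Real.exp (-lam n β k * t) * c k from
        funext fun k => Matrix.mulVec_diagonal _ _ _]
    rfl
  have hyderiv : ∀ t (i : Fin (n+1)),
      HasDerivAt (fun s => y s i) ((mMat n β).mulVec (y t) i) t := by
    intro t i
    have h1 : HasDerivAt (fun s => y s i)
        (∑ k, aMat n (-2) i k * ((Real.exp (-lam n β k * t) * (-lam n β k)) * c k)) t := by
      refine HasDerivAt.fun_sum fun k _ => ?_
      have h2 : HasDerivAt (fun s : ℝ => -lam n β k * s) (-lam n β k) t := by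
        simpa using (hasDerivAt_id t).const_mul (-lam n β (k:ℕ))
      exact ((h2.exp.mul_const (c k)).const_mul _)
    convert h1 using 1
    have hyt : y t = (aMat n (-2)).mulVec (fun k => Real.exp (-lam n β k * t) * c k) := by
      ext i'; rw [hy]; simp only [Matrix.mulVec, dotProduct]
    rw [hyt, Matrix.mulVec_mulVec, mMat_mul_aMat, ← Matrix.mulVec_mulVec,
      show (Matrix.diagonal fun k : Fin (n+1) => -lam n β k).mulVec
            (fun k => Real.exp (-lam n β k * t) * c k)
          = fun k : Fin (n+1) => -lam n β k * (Real.exp (-lam n β k * t) * c k) from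
        funext fun k => Matrix.mulVec_diagonal _ _ _]
    simp only [Matrix.mulVec, dotProduct]
    exact Finset.sum_congr rfl fun k _ => by ring
  have hy0 : y 0 = e0 := by
    rw [← hyRHS 0]
    have he : (fun k : Fin (n+1) => Real.exp (-lam n β k * 0)) = fun _ => 1 := by
      funext k; rw [mul_zero, Real.exp_zero]
    rw [he, Matrix.diagonal_one, Matrix.mul_one, aMat_mul, show (-2:ℝ) + 2 = 0 by norm_num, aMat_zero,
      Matrix.one_mulVec]
  -- uniqueness
  have hx' : ∀ s : ℝ, HasDerivAt x ((mMat n β).mulVec (x s)) s :=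
    fun s => hasDerivAt_pi.mpr (hderiv s)
  have hy' : ∀ s : ℝ, HasDerivAt y ((mMat n β).mulVec (y s)) s :=
    fun s => hasDerivAt_pi.mpr (hyderiv s)
  set L : (Fin (n+1) → ℝ) →L[ℝ] (Fin (n+1) → ℝ) :=
    LinearMap.toContinuousLinearMap ((mMat n β).mulVecLin) with hL
  have hvlip : ∀ s : ℝ,
      LipschitzOnWith ‖L‖₊ (fun z : Fin (n+1) → ℝ => (mMat n β).mulVec z) Set.univ :=
    fun _ => (L.lipschitz.lipschitzOnWith)
  have hxcont : Continuous x :=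
    continuous_pi fun i => continuous_iff_continuousAt.mpr fun s => (hderiv s i).continuousAt
  have hycont : Continuous y :=
    continuous_pi fun i => continuous_iff_continuousAt.mpr fun s => (hyderiv s i).continuousAt
  intro t
  rw [hyRHS t]
  have hmem : t ∈ Set.Icc (-(|t|+1)) (|t|+1) := by
    constructor <;> [nlinarith [abs_nonneg t, neg_abs_le t]; nlinarith [le_abs_self t]]
  have h0mem : (0:ℝ) ∈ Set.Ioo (-(|t|+1)) (|t|+1) := by
    constructor <;> nlinarith [abs_nonneg t]
  exact ODE_solution_unique_of_mem_Icc (fun s _ => hvlip s) h0mem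
    hxcont.continuousOn (fun s _ => hx' s) (fun _ _ => Set.mem_univ _)
    hycont.continuousOn (fun s _ => hy' s) (fun _ _ => Set.mem_univ _)
    (hinit.trans hy0.symm) hmem
end

section
/- The functions x_k(t) defined recursively by x_0(t) = e^{−λ_0 t} and x_k'(t) = 2λ_{k-1}x_{k-1}(t) − λ_k x_k(t) with x_k(0) = 0 for k ≥ 1 satisfy the identity Σ_{k=0}^{n} x_k(t) = (2 − e^{−βt/n})^n for all t ≥ 0. -/
noncomputable def ysol (n : ℕ) (β : ℝ) (k : ℕ) (t : ℝ) : ℝ :=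
  (n.choose k : ℝ) * Real.exp (-(lam n β k) * t) *
    (2 - 2 * Real.exp (-(β / n) * t)) ^ k

lemma ysol_deriv (n : ℕ) (hn : 1 ≤ n) (β : ℝ) (k : ℕ) (hk : 1 ≤ k) (hkn : k ≤ n)
    (t : ℝ) :
    HasDerivAt (ysol n β k)
      (2 * lam n β (k - 1) * ysol n β (k - 1) t - lam n β k * ysol n β k t) t := by
  have hE : HasDerivAt (fun s => Real.exp (-(β / n) * s))
      (-(β / n) * Real.exp (-(β / n) * t)) t := by
    have := ((hasDerivAt_id t).const_mul (-(β / n))).exp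
    simpa [mul_comm] using this
  have hF : HasDerivAt (fun s => Real.exp (-(lam n β k) * s))
      (-(lam n β k) * Real.exp (-(lam n β k) * t)) t := by
    have := ((hasDerivAt_id t).const_mul (-(lam n β k))).exp
    simpa [mul_comm] using this
  have hin : HasDerivAt (fun s => 2 - 2 * Real.exp (-(β / n) * s))
      (-(2 * (-(β / n) * Real.exp (-(β / n) * t)))) t := by
    simpa using ((hE.const_mul 2).const_sub 2)
  have hpow := hin.pow k
  have hy := ((hF.const_mul ((n.choose k : ℝ))).mul hpow)
  refine hy.congr_deriv ?_
  simp only [Pi.pow_apply]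
  symm
  have hne : (n : ℝ) ≠ 0 := by positivity
  have hcast : ((k - 1 : ℕ) : ℝ) = (k : ℝ) - 1 := by
    have := Nat.cast_sub hk (R := ℝ)
    simpa using this
  have hchoose : ((n.choose (k - 1) : ℝ)) * ((n : ℝ) - ((k : ℝ) - 1)) =
      (n.choose k : ℝ) * k := by
    have h1 : n.choose ((k - 1) + 1) * ((k - 1) + 1) = n.choose (k - 1) * (n - (k - 1)) :=
      Nat.choose_succ_right_eq n (k - 1)
    have hk1 : (k - 1) + 1 = k := Nat.succ_pred_eq_of_pos hk
    rw [hk1] at h1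
    have := congrArg (fun m : ℕ => (m : ℝ)) h1
    push_cast [Nat.cast_sub (le_trans (Nat.sub_le k 1) hkn)] at this
    rw [hcast] at *
    linarith [this]
  set E := Real.exp (-(β / n) * t) with hEdef
  set A := Real.exp (-(β * ((n:ℝ) - k) / n) * t) with hAdef
  have hexp : Real.exp (-(β * ((n:ℝ) - ((k:ℝ) - 1)) / n) * t) = A * E := by
    rw [hAdef, hEdef, ← Real.exp_add]
    congr 1
    field_simp
    ring
  have hpowsplit : (2 - 2 * E) ^ k = (2 - 2 * E) ^ (k - 1) * (2 - 2 * E) := by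
    rw [← pow_succ]; congr 1; omega
  simp only [ysol, lam, hcast]
  rw [hexp]
  simp only [← hEdef, ← hAdef] at *
  simp only [hpowsplit]
  linear_combination (2 * β / (n:ℝ) * A * E * (2 - 2 * E) ^ (k - 1)) * hchoose

/-- With x_0(t) = e^{−λ_0 t} and x_k' = 2λ_{k−1}x_{k−1} − λ_k x_k, x_k(0)=0 (k ≥ 1),
one has Σ_{k=0}^n x_k(t) = (2 − e^{−βt/n})^n for t ≥ 0. -/
theorem sum_solution (n : ℕ) (hn : 1 ≤ n) (β : ℝ) (hβ : 0 < β)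
    (x : ℕ → ℝ → ℝ)
    (hx0 : ∀ t : ℝ, x 0 t = Real.exp (-(lam n β 0) * t))
    (hderiv : ∀ k, 1 ≤ k → k ≤ n → ∀ t : ℝ,
      HasDerivAt (x k) (2 * lam n β (k - 1) * x (k - 1) t - lam n β k * x k t) t)
    (hinit : ∀ k, 1 ≤ k → k ≤ n → x k 0 = 0) :
    ∀ t : ℝ, 0 ≤ t →
      ∑ k ∈ Finset.range (n + 1), x k t = (2 - Real.exp (-β * t / n)) ^ n := by
  intro t ht
  have hne : (n : ℝ) ≠ 0 := by positivity
  have key : ∀ k, k ≤ n → ∀ s : ℝ, x k s = ysol n β k s := by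
    intro k
    induction k with
    | zero =>
      intro _ s
      simp [ysol, hx0 s]
    | succ k ih =>
      intro hkn s
      have hk1 : 1 ≤ k + 1 := Nat.succ_le_succ (Nat.zero_le k)
      have ihk := ih (le_of_lt (Nat.lt_of_succ_le hkn))
      set a := lam n β (k + 1) with ha
      have hxd : ∀ u : ℝ, HasDerivAt (fun v => x (k+1) v - ysol n β (k+1) v)
          (-a * (x (k+1) u - ysol n β (k+1) u)) u := by
        intro u
        have h1 := hderiv (k+1) hk1 hkn u
        have h2 := ysol_deriv n hn β (k+1) hk1 hkn u
        simp only [Nat.add_sub_cancel] at h1 h2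
        rw [ihk u] at h1
        have := h1.sub h2
        refine this.congr_deriv ?_
        ring
      have hg : ∀ u : ℝ, HasDerivAt (fun v => (x (k+1) v - ysol n β (k+1) v) * Real.exp (a * v))
          0 u := by
        intro u
        have hexp : HasDerivAt (fun v => Real.exp (a * v)) (a * Real.exp (a * u)) u := by
          have := ((hasDerivAt_id u).const_mul a).exp
          simpa [mul_comm] using this
        have := (hxd u).mul hexp
        refine this.congr_deriv ?_
        ring
      have hy0 : ysol n β (k+1) 0 = 0 := by
        simp [ysol]
      have hcon : (fun v => (x (k+1) v - ysol n β (k+1) v) * Real.exp (a * v)) s =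
          (fun v => (x (k+1) v - ysol n β (k+1) v) * Real.exp (a * v)) 0 :=
        is_const_of_deriv_eq_zero (fun u => (hg u).differentiableAt)
          (fun u => (hg u).deriv) s 0
      simp only [hinit (k+1) hk1 hkn, hy0, sub_zero, sub_self, zero_mul, mul_comm] at hcon
      have hexpne : Real.exp (a * s) ≠ 0 := Real.exp_ne_zero _
      have := mul_eq_zero.mp hcon
      rcases this with h | h
      · linarith
      · exact absurd h (Real.exp_ne_zero _)
  have hsum : ∑ k ∈ Finset.range (n + 1), x k t = ∑ k ∈ Finset.range (n + 1), ysol n β k t :=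
    Finset.sum_congr rfl (fun k hk => key k (Nat.lt_succ_iff.mp (Finset.mem_range.mp hk)) t)
  rw [hsum]
  set E := Real.exp (-β * t / n) with hEdef
  have hterm : ∀ k ∈ Finset.range (n + 1),
      ysol n β k t = (2 - 2 * E) ^ k * E ^ (n - k) * (n.choose k : ℝ) := by
    intro k hk
    have hkn : k ≤ n := Nat.lt_succ_iff.mp (Finset.mem_range.mp hk)
    have hE1 : Real.exp (-(β / n) * t) = E := by
      rw [hEdef]; congr 1; ring
    have hE2 : Real.exp (-(lam n β k) * t) = E ^ (n - k) := by
      rw [hEdef, ← Real.exp_nat_mul]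
      have harg : -(lam n β k) * t = ((n - k : ℕ) : ℝ) * (-β * t / n) := by
        rw [Nat.cast_sub hkn]
        simp only [lam]
        ring
      rw [harg]
    rw [ysol, hE1, hE2]
    ring
  rw [Finset.sum_congr rfl hterm]
  have : (2 : ℝ) - E = (2 - 2 * E) + E := by ring
  rw [this, add_pow]
end

section
/- With x_k(t) as the solution of the branching ODE system, the generating function ψ(u,t) = Σ_{k=0}^{n} u^{n−k} x_k(t) equals (2 + (u−2)e^{−βt/n})^n for all real u and t ≥ 0. -/
noncomputable def yfun (n : ℕ) (β : ℝ) (k : ℕ) (t : ℝ) : ℝ :=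
  (n.choose k : ℝ) * 2 ^ k * Real.exp (-β * t / n) ^ (n - k) *
    (1 - Real.exp (-β * t / n)) ^ k

lemma ode_unique_zero (c : ℝ) (f : ℝ → ℝ)
    (hf : ∀ t, HasDerivAt f (-c * f t) t) (h0 : f 0 = 0) (t : ℝ) : f t = 0 := by
  set g : ℝ → ℝ := fun s => Real.exp (c * s) * f s with hg
  have hg' : ∀ s, HasDerivAt g 0 s := by
    intro s
    have h0 : HasDerivAt (fun s : ℝ => c * s) c s := by
      simpa using (hasDerivAt_id s).const_mul c
    have h1 : HasDerivAt (fun s : ℝ => Real.exp (c * s)) (Real.exp (c * s) * c) s :=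
      (Real.hasDerivAt_exp (c * s)).comp s h0
    have h2 := h1.mul (hf s)
    have h2' : HasDerivAt g _ s := h2
    convert h2' using 1
    ring
  have hconst : g t = g 0 :=
    is_const_of_deriv_eq_zero (fun s => (hg' s).differentiableAt)
      (fun s => (hg' s).deriv) t 0
  have hz : Real.exp (c * t) * f t = 0 := by simpa [hg, h0] using hconst
  rcases mul_eq_zero.mp hz with h | h
  · exact absurd h (Real.exp_ne_zero _)
  · exact h

lemma hasDerivAt_q (n : ℕ) (β : ℝ) (t : ℝ) :
    HasDerivAt (fun t : ℝ => Real.exp (-β * t / n)) (-(β / n) * Real.exp (-β * t / n)) t := by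
  have h1 : HasDerivAt (fun t : ℝ => -β * t / n) (-(β / n)) t := by
    have := ((hasDerivAt_id t).const_mul (-β)).div_const (n : ℝ)
    have this' : HasDerivAt (fun t : ℝ => -β * t / n) _ t := this
    convert this' using 1
    ring
  have := (Real.hasDerivAt_exp (-β * t / n)).comp t h1
  have this' : HasDerivAt (fun t : ℝ => Real.exp (-β * t / n)) _ t := this
  convert this' using 1
  ring

lemma hasDerivAt_y (n : ℕ) (β : ℝ) (k : ℕ) (t : ℝ) :
    HasDerivAt (yfun n β k)
      ((n.choose k : ℝ) * 2 ^ k *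
        ((((n - k : ℕ) : ℝ) * Real.exp (-β * t / n) ^ (n - k - 1) *
            (-(β / n) * Real.exp (-β * t / n))) * (1 - Real.exp (-β * t / n)) ^ k
        + Real.exp (-β * t / n) ^ (n - k) *
          (((k : ℝ) * (1 - Real.exp (-β * t / n)) ^ (k - 1) *
            ((β / n) * Real.exp (-β * t / n)))))) t := by
  have hQ := hasDerivAt_q n β t
  have h1 := hQ.pow (n - k)
  have h2 := (hQ.const_sub 1).pow k
  have h3 := (h1.mul h2).const_mul ((n.choose k : ℝ) * 2 ^ k)
  have h3' : HasDerivAt (fun y : ℝ => (n.choose k : ℝ) * 2 ^ k *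
      (Real.exp (-β * y / n) ^ (n - k) * (1 - Real.exp (-β * y / n)) ^ k)) _ t := h3
  convert h3' using 1
  · ext s; simp only [yfun]; ring
  · simp only [Pi.pow_apply]
    ring

lemma y_ode0 (n : ℕ) (hn : 1 ≤ n) (β : ℝ) (t : ℝ) :
    HasDerivAt (yfun n β 0) (-(lam n β 0) * yfun n β 0 t) t := by
  obtain ⟨m, rfl⟩ : ∃ m, n = m + 1 := ⟨n - 1, by omega⟩
  have h := hasDerivAt_y (m + 1) β 0 t
  convert h using 1
  have hne : ((m : ℝ) + 1) ≠ 0 := by positivity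
  simp only [yfun, lam, Nat.choose_zero_right, Nat.sub_zero, Nat.cast_zero, Nat.cast_one,
    Nat.cast_add, pow_zero, Nat.add_sub_cancel]
  push_cast
  set Q := Real.exp (-β * t / ((m : ℝ) + 1)) with hQdef
  clear_value Q
  rw [pow_succ]
  field_simp
  ring

lemma y_ode (n : ℕ) (β : ℝ) (k : ℕ) (hk : 1 ≤ k) (hkn : k ≤ n) (t : ℝ) :
    HasDerivAt (yfun n β k)
      (2 * lam n β (k - 1) * yfun n β (k - 1) t - lam n β k * yfun n β k t) t := by
  obtain ⟨j, rfl⟩ : ∃ j, k = j + 1 := ⟨k - 1, by omega⟩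
  obtain ⟨m, rfl⟩ : ∃ m, n = m + j + 1 := ⟨n - j - 1, by omega⟩
  have h := hasDerivAt_y (m + j + 1) β (j + 1) t
  convert h using 1
  have hsub1 : m + j + 1 - (j + 1) = m := by omega
  have hsub2 : m + j + 1 - (j + 1) - 1 = m - 1 := by omega
  have hsub3 : j + 1 - 1 = j := by omega
  have hsub4 : m + j + 1 - j = m + 1 := by omega
  have hchoose : ((m + j + 1).choose (j + 1) : ℝ) * ((j : ℝ) + 1) =
      ((m + j + 1).choose j : ℝ) * ((m : ℝ) + 1) := by
    have h5 := Nat.choose_succ_right_eq (m + j + 1) j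
    rw [hsub4] at h5
    exact_mod_cast congrArg (fun z : ℕ => (z : ℝ)) h5
  have hne : ((m : ℝ) + (j : ℝ) + 1) ≠ 0 := by positivity
  have hj1 : ((j : ℝ) + 1) ≠ 0 := by positivity
  simp only [yfun, lam, hsub1, hsub2, hsub3, hsub4]
  push_cast
  set Q := Real.exp (-β * t / ((m : ℝ) + (j : ℝ) + 1)) with hQdef
  clear_value Q
  set A := ((m + j + 1).choose (j + 1) : ℝ) with hAdef
  set B := ((m + j + 1).choose j : ℝ) with hBdef
  clear_value A B
  have hA : A = B * ((m : ℝ) + 1) / ((j : ℝ) + 1) := by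
    field_simp
    linarith [hchoose]
  rw [hA]
  rcases Nat.eq_zero_or_pos m with hm | hm
  · subst hm
    push_cast
    field_simp
    ring
  · obtain ⟨p, rfl⟩ : ∃ p, m = p + 1 := ⟨m - 1, by omega⟩
    have hsub5 : p + 1 - 1 = p := by omega
    simp only [hsub5]
    push_cast
    rw [pow_succ]
    field_simp
    ring

/-- The generating function ψ(u,t) = Σ u^{n−k} x_k(t) equals (2 + (u−2)e^{−βt/n})^n. -/
theorem generating_function (n : ℕ) (hn : 1 ≤ n) (β : ℝ) (hβ : 0 < β)
    (x : ℕ → ℝ → ℝ)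
    (hderiv0 : ∀ t : ℝ, HasDerivAt (x 0) (-(lam n β 0) * x 0 t) t)
    (hinit0 : x 0 0 = 1)
    (hderiv : ∀ k, 1 ≤ k → k ≤ n → ∀ t : ℝ,
      HasDerivAt (x k) (2 * lam n β (k - 1) * x (k - 1) t - lam n β k * x k t) t)
    (hinit : ∀ k, 1 ≤ k → k ≤ n → x k 0 = 0) :
    ∀ (u : ℝ) (t : ℝ), 0 ≤ t →
      ∑ k ∈ Finset.range (n + 1), u ^ (n - k) * x k t
        = (2 + (u - 2) * Real.exp (-β * t / n)) ^ n := by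
  -- first: x k = yfun n β k for all k ≤ n
  have key : ∀ k, k ≤ n → ∀ t, x k t = yfun n β k t := by
    intro k
    induction k with
    | zero =>
      intro _ t
      have hdiff : ∀ s, HasDerivAt (fun s => x 0 s - yfun n β 0 s)
          (-(lam n β 0) * (x 0 s - yfun n β 0 s)) s := by
        intro s
        have := (hderiv0 s).sub (y_ode0 n hn β s)
        have this' : HasDerivAt (fun s => x 0 s - yfun n β 0 s) _ s := this
        convert this' using 1
        ring
      have h0 : x 0 0 - yfun n β 0 0 = 0 := by
        simp [yfun, hinit0]
      have := ode_unique_zero (lam n β 0) _ hdiff h0 t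
      linarith [this]
    | succ j ih =>
      intro hkn t
      have hj : j ≤ n := by omega
      have hxy := ih hj
      have hdiff : ∀ s, HasDerivAt (fun s => x (j + 1) s - yfun n β (j + 1) s)
          (-(lam n β (j + 1)) * (x (j + 1) s - yfun n β (j + 1) s)) s := by
        intro s
        have h1 := hderiv (j + 1) (by omega) hkn s
        have h2 := y_ode n β (j + 1) (by omega) hkn s
        have h3 := h1.sub h2
        have h3' : HasDerivAt (fun s => x (j + 1) s - yfun n β (j + 1) s) _ s := h3
        convert h3' using 1
        have h4 : j + 1 - 1 = j := by omega
        rw [h4]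
        rw [hxy s]
        ring
      have h0 : x (j + 1) 0 - yfun n β (j + 1) 0 = 0 := by
        rw [hinit (j + 1) (by omega) hkn]
        simp [yfun]
      have := ode_unique_zero (lam n β (j + 1)) _ hdiff h0 t
      linarith [this]
  intro u t _
  have hsum : ∑ k ∈ Finset.range (n + 1), u ^ (n - k) * x k t
      = ∑ k ∈ Finset.range (n + 1), u ^ (n - k) * yfun n β k t := by
    refine Finset.sum_congr rfl fun k hk => ?_
    rw [key k (by simpa using Nat.lt_succ_iff.mp (Finset.mem_range.mp hk))]
  rw [hsum]
  set Q := Real.exp (-β * t / n) with hQ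
  have hbin := add_pow (2 * (1 - Q)) (u * Q) n
  have hQsum : ∑ k ∈ Finset.range (n + 1), u ^ (n - k) * yfun n β k t
      = (2 * (1 - Q) + u * Q) ^ n := by
    rw [hbin]
    refine Finset.sum_congr rfl fun k hk => ?_
    simp only [yfun, ← hQ]
    rw [mul_pow, mul_pow]
    ring
  rw [hQsum]
  ring_nf
end

section
/- Let t*_n be the unique positive solution of (1 − e^{−βt/n}/2)^n = 1/2. Then t*_n − (n/β)·ln(n/ln 4) converges to (ln 2)/(2β) as n → ∞. -/
open Real Filter

/-- Taylor bounds for exp(-x) on [0,1]. -/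
lemma exp_neg_bounds {x : ℝ} (hx0 : 0 ≤ x) (hx1 : x ≤ 1) :
    1 - x + x^2/2 - (2/9)*x^3 ≤ Real.exp (-x) ∧
      Real.exp (-x) ≤ 1 - x + x^2/2 + (2/9)*x^3 := by
  have habs : |(-x)| ≤ 1 := by rw [abs_neg, abs_of_nonneg hx0]; exact hx1
  have h := Real.exp_bound habs (n := 3) (by norm_num)
  have hsum : ∑ m ∈ Finset.range 3, (-x) ^ m / (m.factorial : ℝ) = 1 - x + x^2/2 := by
    simp [Finset.sum_range_succ]
    ring
  rw [hsum, abs_neg, abs_of_nonneg hx0] at h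
  norm_num [Nat.factorial, abs_le] at h
  constructor <;> nlinarith [h.1, h.2]

/-- The key limit: log((1-e^{-x})/x)/x → -1/2 as x → 0⁺. -/
lemma key_limit :
    Tendsto (fun x : ℝ => Real.log ((1 - Real.exp (-x)) / x) / x)
      (nhdsWithin 0 (Set.Ioi 0)) (nhds (-(1/2))) := by
  have hmem : Set.Ioo (0:ℝ) 1 ∈ nhdsWithin (0:ℝ) (Set.Ioi 0) :=
    Ioo_mem_nhdsGT_of_mem ⟨le_refl 0, one_pos⟩
  -- lower bound function
  have hlow : Tendsto (fun x : ℝ => (-(1/2) - (2/9)*x) / (1 - x/2 - (2/9)*x^2))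
      (nhdsWithin 0 (Set.Ioi 0)) (nhds (-(1/2))) := by
    have : ContinuousAt (fun x : ℝ => (-(1/2) - (2/9)*x) / (1 - x/2 - (2/9)*x^2)) 0 := by
      apply ContinuousAt.div
      · fun_prop
      · fun_prop
      · norm_num
    have h0 := this.tendsto
    norm_num at h0
    exact h0.mono_left nhdsWithin_le_nhds
  have hup : Tendsto (fun x : ℝ => -(1/2) + (2/9)*x)
      (nhdsWithin 0 (Set.Ioi 0)) (nhds (-(1/2))) := by
    have : ContinuousAt (fun x : ℝ => -(1/2) + (2/9)*x) 0 := by fun_prop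
    have h0 := this.tendsto
    norm_num at h0
    exact h0.mono_left nhdsWithin_le_nhds
  refine tendsto_of_tendsto_of_tendsto_of_le_of_le' hlow hup ?_ ?_
  · filter_upwards [hmem] with x hx
    obtain ⟨hx0, hx1⟩ := hx
    obtain ⟨hlo, hhi⟩ := exp_neg_bounds hx0.le hx1.le
    set H : ℝ := (1 - Real.exp (-x)) / x with hH
    have hL : (0:ℝ) < 1 - x/2 - (2/9)*x^2 := by nlinarith
    have hHL : 1 - x/2 - (2/9)*x^2 ≤ H := by
      rw [hH, le_div_iff₀ hx0]; nlinarith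
    have hHpos : 0 < H := lt_of_lt_of_le hL hHL
    -- log H ≥ 1 - 1/H ≥ 1 - 1/L
    have hlog : 1 - H⁻¹ ≤ Real.log H := by
      have := Real.log_le_sub_one_of_pos (inv_pos.mpr hHpos)
      rw [Real.log_inv] at this
      linarith
    have hinv : H⁻¹ ≤ (1 - x/2 - (2/9)*x^2)⁻¹ := by
      exact inv_anti₀ hL hHL
    have h1 : 1 - (1 - x/2 - (2/9)*x^2)⁻¹ ≤ Real.log H := by
      have : 1 - H⁻¹ ≥ 1 - (1 - x/2 - (2/9)*x^2)⁻¹ := by linarith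
      linarith
    rw [div_le_div_iff₀ hL hx0]
    have h2 : (1 - (1 - x/2 - (2/9)*x^2)⁻¹) * (1 - x/2 - (2/9)*x^2)
        = (1 - x/2 - (2/9)*x^2) - 1 := by
      rw [sub_mul, one_mul, inv_mul_cancel₀ hL.ne']
    have h3 := mul_le_mul_of_nonneg_right h1 hL.le
    rw [h2] at h3
    nlinarith [h3]
  · filter_upwards [hmem] with x hx
    obtain ⟨hx0, hx1⟩ := hx
    obtain ⟨hlo, hhi⟩ := exp_neg_bounds hx0.le hx1.le
    set H : ℝ := (1 - Real.exp (-x)) / x with hH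
    have hL : (0:ℝ) < 1 - x/2 - (2/9)*x^2 := by nlinarith
    have hHL : 1 - x/2 - (2/9)*x^2 ≤ H := by
      rw [hH, le_div_iff₀ hx0]; nlinarith
    have hHU : H ≤ 1 - x/2 + (2/9)*x^2 := by
      rw [hH, div_le_iff₀ hx0]; nlinarith
    have hHpos : 0 < H := lt_of_lt_of_le hL hHL
    have hlog : Real.log H ≤ H - 1 := Real.log_le_sub_one_of_pos hHpos
    rw [div_le_iff₀ hx0]
    nlinarith

/-- If t*_n solves (1 − e^{−βt/n}/2)^n = 1/2, then
t*_n − (n/β)·ln(n/ln 4) → (ln 2)/(2β) as n → ∞. -/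
theorem half_time_asymptotics (β : ℝ) (hβ : 0 < β) (t : ℕ → ℝ)
    (ht : ∀ n : ℕ, 2 ≤ n →
      0 < t n ∧ (1 - Real.exp (-β * t n / n) / 2) ^ n = 1 / 2) :
    Filter.Tendsto
      (fun n : ℕ => t n - (n / β) * Real.log (n / Real.log 4))
      Filter.atTop (nhds (Real.log 2 / (2 * β))) := by
  set c : ℝ := Real.log 2 with hc
  have hcpos : 0 < c := Real.log_pos one_lt_two
  -- x n = c / n tends to 0 within Ioi 0
  have hx : Tendsto (fun n : ℕ => c / (n : ℝ)) atTop (nhdsWithin 0 (Set.Ioi 0)) := by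
    apply tendsto_nhdsWithin_of_tendsto_nhds_of_eventually_within
    · exact tendsto_const_div_atTop_nhds_zero_nat c
    · filter_upwards [eventually_ge_atTop 1] with n hn
      have : (0:ℝ) < n := by exact_mod_cast hn
      exact div_pos hcpos this
  have hcomp := key_limit.comp hx
  have hmul := hcomp.const_mul (-(c/β))
  have hval : (-(c/β)) * (-(1/2)) = Real.log 2 / (2 * β) := by
    rw [hc]; ring
  rw [hval] at hmul
  refine Filter.Tendsto.congr' ?_ hmul
  filter_upwards [eventually_ge_atTop 2] with n hn
  obtain ⟨htpos, heq⟩ := ht n hn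
  have hnpos : (0:ℝ) < n := by
    have : (2:ℝ) ≤ n := by exact_mod_cast hn
    linarith
  have hnne : (n:ℝ) ≠ 0 := hnpos.ne'
  set N : ℝ := (n : ℝ) with hN
  set e : ℝ := Real.exp (-(c/N)) with he
  have he1 : e < 1 := by
    rw [he, ← Real.exp_zero]
    apply Real.exp_lt_exp.mpr
    have : 0 < c / N := div_pos hcpos hnpos
    linarith
  have h1e : 0 < 1 - e := by linarith
  -- solve for the base of the power
  have hb0 : (0:ℝ) < 1 - Real.exp (-β * t n / N) / 2 := by
    have harg : -β * t n / N < 0 := by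
      apply div_neg_of_neg_of_pos _ hnpos
      nlinarith
    have : Real.exp (-β * t n / N) < 1 := by
      rw [← Real.exp_zero]; exact Real.exp_lt_exp.mpr harg
    linarith
  have hb : 1 - Real.exp (-β * t n / N) / 2 = e := by
    have hroot : ((1 - Real.exp (-β * t n / N) / 2) ^ n) ^ ((n:ℝ)⁻¹)
        = 1 - Real.exp (-β * t n / N) / 2 := by
      rw [← Real.rpow_natCast (1 - Real.exp (-β * t n / N) / 2) n,
        ← Real.rpow_mul hb0.le, mul_inv_cancel₀ hnne, Real.rpow_one]
    rw [heq] at hroot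
    rw [← hroot, Real.rpow_def_of_pos (by norm_num : (0:ℝ) < 1/2)]
    rw [he, hc]
    congr 1
    rw [show (1/2 : ℝ) = 2⁻¹ by norm_num, Real.log_inv]
    rw [hN, div_eq_mul_inv]
    ring
  have hexp : Real.exp (-β * t n / N) = 2 * (1 - e) := by linarith
  have hlogexp : -β * t n / N = Real.log (2 * (1 - e)) := by
    have := congrArg Real.log hexp
    rwa [Real.log_exp] at this
  set L1 : ℝ := Real.log (2 * (1 - e)) with hL1
  set L2 : ℝ := Real.log (N / (2 * c)) with hL2
  have htval : t n = -(N * L1) / β := by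
    rw [← hlogexp]
    field_simp
  have hlog4 : Real.log 4 = 2 * c := by
    rw [hc, show (4:ℝ) = 2^2 by norm_num, Real.log_pow]
    push_cast; ring
  have key_eq : Real.log ((1 - e) / (c / N)) = L1 + L2 := by
    rw [hL1, hL2, ← Real.log_mul (by positivity) (by positivity)]
    congr 1
    field_simp
  show -(c/β) * (Real.log ((1 - e) / (c / N)) / (c / N))
      = t n - N / β * Real.log (N / Real.log 4)
  rw [key_eq, htval, hlog4, ← hL2]
  have hcne : c ≠ 0 := hcpos.ne'
  field_simp
  ring
end

section
/- The solution x_k(t) of the branching ODE system is given explicitly by x_k(t) = 2^k · C(n,k) · e^{−β t (n−k)/n} · (1 − e^{−βt/n})^k for k = 0,...,n and t ≥ 0. -/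
lemma ode_zero (c : ℝ) (y : ℝ → ℝ)
    (hy : ∀ t, HasDerivAt y (c * y t) t) (h0 : y 0 = 0) : ∀ t, y t = 0 := by
  have hd : ∀ s, HasDerivAt (fun u => y u * Real.exp (-c * u)) 0 s := by
    intro s
    have h1 : HasDerivAt (fun u : ℝ => Real.exp (-c * u)) (Real.exp (-c * s) * (-c)) s := by
      have := ((hasDerivAt_id s).const_mul (-c)).exp
      convert this using 1 <;> simp
    have h2 := (hy s).mul h1
    refine h2.congr_deriv ?_
    ring
  have hdiff : Differentiable ℝ (fun u => y u * Real.exp (-c * u)) :=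
    fun s => (hd s).differentiableAt
  intro t
  have hconst := is_const_of_deriv_eq_zero hdiff (fun s => (hd s).deriv) t 0
  simp only [h0, zero_mul] at hconst
  have he := Real.exp_ne_zero (-c * t)
  exact (mul_eq_zero.mp hconst).resolve_right he

/-- Explicit solution: x_k(t) = 2^k·C(n,k)·e^{−βt(n−k)/n}·(1 − e^{−βt/n})^k. -/
theorem explicit_solution (n : ℕ) (hn : 1 ≤ n) (β : ℝ) (hβ : 0 < β)
    (x : ℕ → ℝ → ℝ)
    (hderiv0 : ∀ t : ℝ, HasDerivAt (x 0) (-(lam n β 0) * x 0 t) t)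
    (hinit0 : x 0 0 = 1)
    (hderiv : ∀ k, 1 ≤ k → k ≤ n → ∀ t : ℝ,
      HasDerivAt (x k) (2 * lam n β (k - 1) * x (k - 1) t - lam n β k * x k t) t)
    (hinit : ∀ k, 1 ≤ k → k ≤ n → x k 0 = 0) :
    ∀ k, k ≤ n → ∀ t : ℝ, 0 ≤ t →
      x k t = 2 ^ k * (n.choose k) * Real.exp (-β * t * ((n : ℝ) - k) / n) *
        (1 - Real.exp (-β * t / n)) ^ k := by
  have hn0 : (n : ℝ) ≠ 0 := Nat.cast_ne_zero.mpr (by omega)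
  suffices H : ∀ k, k ≤ n → ∀ t : ℝ,
      x k t = 2 ^ k * (n.choose k) * Real.exp (-β * t * ((n : ℝ) - k) / n) *
        (1 - Real.exp (-β * t / n)) ^ k by
    intro k hk t _
    exact H k hk t
  intro k
  induction k with
  | zero =>
    intro _ t
    have hz := ode_zero (-(lam n β 0)) (fun u => x 0 u - Real.exp (-(lam n β 0) * u))
      (fun s => by
        have h1 : HasDerivAt (fun u : ℝ => Real.exp (-(lam n β 0) * u))
            (-(lam n β 0) * Real.exp (-(lam n β 0) * s)) s := by
          have := ((hasDerivAt_id s).const_mul (-(lam n β 0))).exp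
          convert this using 1 <;> simp <;> ring
        have h2 := (hderiv0 s).sub h1
        refine h2.congr_deriv ?_
        ring)
      (by simp [hinit0])
    have hxt : x 0 t = Real.exp (-(lam n β 0) * t) := by
      have := hz t
      linarith
    rw [hxt]
    simp only [pow_zero, Nat.choose_zero_right, Nat.cast_one, Nat.cast_zero, one_mul, mul_one]
    congr 1
    simp [lam]
    ring
  | succ k ih =>
    intro hk t
    have hk' : k ≤ n := by omega
    set A : ℝ := 2 ^ (k + 1) * (n.choose (k + 1) : ℝ) with hA
    set F : ℝ → ℝ := fun u => A * Real.exp (-β * u * ((n : ℝ) - ((k : ℕ) + 1 : ℕ)) / n) *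
        (1 - Real.exp (-β * u / n)) ^ (k + 1) with hF
    -- derivative of F
    have hFd : ∀ s : ℝ, HasDerivAt F
        (A * (Real.exp (-β * s * ((n : ℝ) - ((k : ℕ) + 1 : ℕ)) / n) * (-β * ((n : ℝ) - ((k : ℕ) + 1 : ℕ)) / n)) *
            (1 - Real.exp (-β * s / n)) ^ (k + 1)
          + A * Real.exp (-β * s * ((n : ℝ) - ((k : ℕ) + 1 : ℕ)) / n) *
            (((k : ℝ) + 1) * (1 - Real.exp (-β * s / n)) ^ k * (Real.exp (-β * s / n) * (β / n)))) s := by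
      intro s
      have hE1 : HasDerivAt (fun u : ℝ => Real.exp (-β * u * ((n : ℝ) - ((k : ℕ) + 1 : ℕ)) / n))
          (Real.exp (-β * s * ((n : ℝ) - ((k : ℕ) + 1 : ℕ)) / n) * (-β * ((n : ℝ) - ((k : ℕ) + 1 : ℕ)) / n)) s := by
        have := ((((hasDerivAt_id s).const_mul (-β)).mul_const ((n : ℝ) - ((k : ℕ) + 1 : ℕ))).div_const (n : ℝ)).exp
        convert this using 1 <;> simp <;> ring
      have hE2 : HasDerivAt (fun u : ℝ => Real.exp (-β * u / n))
          (Real.exp (-β * s / n) * (-β / n)) s := by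
        have := (((hasDerivAt_id s).const_mul (-β)).div_const (n : ℝ)).exp
        convert this using 1 <;> simp <;> ring
      have hP : HasDerivAt (fun u : ℝ => (1 - Real.exp (-β * u / n)) ^ (k + 1))
          (((k : ℝ) + 1) * (1 - Real.exp (-β * s / n)) ^ k * (Real.exp (-β * s / n) * (β / n))) s := by
        have := ((hasDerivAt_const s (1 : ℝ)).sub hE2).pow (k + 1)
        refine this.congr_deriv ?_
        symm
        simp only [Nat.add_sub_cancel, Pi.sub_apply]
        push_cast
        ring
      have := (hE1.const_mul A).mul hP
      refine this.congr_deriv ?_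
      ring
    -- choose identity
    have hC : ((n.choose (k + 1) : ℕ) : ℝ) * ((k : ℝ) + 1) = ((n.choose k : ℕ) : ℝ) * ((n : ℝ) - k) := by
      have h := Nat.choose_succ_right_eq n k
      have h2 : ((n.choose (k + 1) * (k + 1) : ℕ) : ℝ) = ((n.choose k * (n - k) : ℕ) : ℝ) := by
        exact_mod_cast congrArg (fun m : ℕ => (m : ℝ)) h
      push_cast [Nat.cast_sub hk'] at h2
      linarith
    -- exponential splitting
    have hexp : ∀ s : ℝ, Real.exp (-β * s * ((n : ℝ) - k) / n)
        = Real.exp (-β * s * ((n : ℝ) - ((k : ℕ) + 1 : ℕ)) / n) * Real.exp (-β * s / n) := by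
      intro s
      rw [← Real.exp_add]
      congr 1
      push_cast
      field_simp
      ring
    -- g := x (k+1) - F satisfies g' = -(lam (k+1)) g
    have hz := ode_zero (-(lam n β (k + 1))) (fun u => x (k + 1) u - F u)
      (fun s => by
        have hx := hderiv (k + 1) (by omega) hk s
        simp only [Nat.add_sub_cancel] at hx
        have h2 := hx.sub (hFd s)
        refine h2.congr_deriv ?_
        symm
        rw [ih hk' s]
        simp only [lam, hA, hF]
        rw [hexp s]
        push_cast
        linear_combination (β / (n : ℝ) * Real.exp (-β * s * ((n : ℝ) - ((k : ℝ) + 1)) / n) *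
          Real.exp (-β * s / n) * (1 - Real.exp (-β * s / n)) ^ k * 2 ^ (k + 1)) * hC)
      (by
        simp only [hF]
        rw [hinit (k + 1) (by omega) hk]
        norm_num)
    have hzt := hz t
    have hxF : x (k + 1) t = F t := by linarith
    exact hxF
end
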